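/- Let η be a real random variable symmetric about 0 with finite fourth moment μ₄ = E[η⁴], variance σ² = E[η²] > 0, and characteristic function φ_η(t) = E[cos(tη)]. Define f(ω) = (1 − φ_η(2ω)) / (2ω²·φ_η(ω)²) for ω > 0. Then as ω → 0⁺, f(ω) = σ² − (1/3)·κ·σ⁴·ω² + o(ω²), where κ = μ₄/σ⁴ − 3 is the excess kurtosis; that is, f(ω) → σ² and (f(ω) − σ²)/ω² → −(1/3)·(μ₄ − 3σ⁴). -/

import Mathlib

open MeasureTheory ProbabilityTheory Filter Topology
open scoped ENNReal
set_option maxHeartbeats 1000000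

lemma asv_aux_nonneg {F F' : ℝ → ℝ} (hF : ∀ x, HasDerivAt F (F' x) x) (h0 : F 0 = 0)
    (hd : ∀ x, 0 ≤ x → 0 ≤ F' x) : ∀ x, 0 ≤ x → 0 ≤ F x := by
  intro x hx
  have hmono : MonotoneOn F (Set.Ici (0:ℝ)) := by
    apply monotoneOn_of_deriv_nonneg (convex_Ici 0)
      (fun y _ => (hF y).continuousAt.continuousWithinAt)
    · intro y hy
      exact (hF y).differentiableAt.differentiableWithinAt
    · intro y hy
      rw [interior_Ici] at hy
      rw [(hF y).deriv]
      exact hd y hy.le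
  have := hmono Set.self_mem_Ici hx hx
  rwa [h0] at this

lemma asv_sin_ge_cube : ∀ x : ℝ, 0 ≤ x → x - x^3/6 ≤ Real.sin x := by
  have h := asv_aux_nonneg (F := fun x => Real.sin x - x + x^3/6)
    (F' := fun x => Real.cos x - 1 + x^2/2)
    (fun x => by
      have h1 := ((Real.hasDerivAt_sin x).sub (hasDerivAt_id x)).add
        ((hasDerivAt_pow 3 x).div_const 6)
      exact h1.congr_deriv (by push_cast; ring))
    (by norm_num)
    (fun x _ => by nlinarith [Real.one_sub_sq_div_two_le_cos (x := x)])
  intro x hx; have := h x hx; linarith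

lemma asv_cos_le_quartic : ∀ x : ℝ, Real.cos x ≤ 1 - x^2/2 + x^4/24 := by
  have key : ∀ x : ℝ, 0 ≤ x → Real.cos x ≤ 1 - x^2/2 + x^4/24 := by
    have h := asv_aux_nonneg (F := fun x => 1 - x^2/2 + x^4/24 - Real.cos x)
      (F' := fun x => -x + x^3/6 + Real.sin x)
      (fun x => by
        have h1 := (((hasDerivAt_const x (1:ℝ)).sub ((hasDerivAt_pow 2 x).div_const 2)).add
          ((hasDerivAt_pow 4 x).div_const 24)).sub (Real.hasDerivAt_cos x)
        exact h1.congr_deriv (by push_cast; ring))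
      (by norm_num)
      (fun x hx => by nlinarith [asv_sin_ge_cube x hx])
    intro x hx; have := h x hx; linarith
  intro x
  rcases le_or_gt 0 x with hx | hx
  · exact key x hx
  · have h := key (-x) (by linarith)
    rw [Real.cos_neg] at h
    nlinarith [h]

lemma asv_sin_le_quintic : ∀ x : ℝ, 0 ≤ x → Real.sin x ≤ x - x^3/6 + x^5/120 := by
  have h := asv_aux_nonneg (F := fun x => x - x^3/6 + x^5/120 - Real.sin x)
    (F' := fun x => 1 - x^2/2 + x^4/24 - Real.cos x)
    (fun x => by
      have h1 := (((hasDerivAt_id x).sub ((hasDerivAt_pow 3 x).div_const 6)).add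
        ((hasDerivAt_pow 5 x).div_const 120)).sub (Real.hasDerivAt_sin x)
      exact h1.congr_deriv (by push_cast; ring))
    (by norm_num)
    (fun x _ => by nlinarith [asv_cos_le_quartic x])
  intro x hx; have := h x hx; linarith

lemma asv_cos_ge_sextic : ∀ x : ℝ, 1 - x^2/2 + x^4/24 - x^6/720 ≤ Real.cos x := by
  have key : ∀ x : ℝ, 0 ≤ x → 1 - x^2/2 + x^4/24 - x^6/720 ≤ Real.cos x := by
    have h := asv_aux_nonneg (F := fun x => Real.cos x - (1 - x^2/2 + x^4/24 - x^6/720))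
      (F' := fun x => -Real.sin x + x - x^3/6 + x^5/120)
      (fun x => by
        have h1 := (Real.hasDerivAt_cos x).sub
          ((((hasDerivAt_const x (1:ℝ)).sub ((hasDerivAt_pow 2 x).div_const 2)).add
            ((hasDerivAt_pow 4 x).div_const 24)).sub ((hasDerivAt_pow 6 x).div_const 720))
        exact h1.congr_deriv (by push_cast; ring))
      (by norm_num)
      (fun x hx => by nlinarith [asv_sin_le_quintic x hx])
    intro x hx; have := h x hx; linarith
  intro x
  rcases le_or_gt 0 x with hx | hx
  · exact key x hx
  · have h := key (-x) (by linarith)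
    rw [Real.cos_neg] at h
    nlinarith [h]

lemma asv_cos_taylor4_abs (x : ℝ) : |Real.cos x - 1 + x^2/2 - x^4/24| ≤ x^4/24 := by
  have h1 := Real.one_sub_sq_div_two_le_cos (x := x)
  have h2 := asv_cos_le_quartic x
  rw [abs_le]; constructor <;> nlinarith

lemma asv_cos_taylor6_abs (x : ℝ) : |Real.cos x - 1 + x^2/2 - x^4/24| ≤ x^6/720 := by
  have h1 := asv_cos_ge_sextic x
  have h2 := asv_cos_le_quartic x
  rw [abs_le]; constructor <;> nlinarith

/-- Fourth-order Taylor expansion (with `o(t⁴)` remainder) of `t ↦ E[cos (t η)]`. -/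
lemma asv_char_expansion
    {Ω : Type*} [MeasureSpace Ω] [IsProbabilityMeasure (ℙ : Measure Ω)]
    (η : Ω → ℝ) (hmeas : Measurable η) (hL4 : MemLp η 4 ℙ)
    (μ4 s2 : ℝ)
    (hμ4 : μ4 = ∫ a, (η a) ^ 4 ∂ℙ)
    (hs2 : s2 = ∫ a, (η a) ^ 2 ∂ℙ)
    (φ : ℝ → ℝ) (hφ : ∀ t, φ t = ∫ a, Real.cos (t * η a) ∂ℙ) :
    Tendsto (fun t => (φ t - 1 + s2*t^2/2 - μ4*t^4/24)/t^4) (𝓝[>] (0:ℝ)) (𝓝 0) := by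
  have hint4 : Integrable (fun a => (η a)^4) ℙ := by
    have h := hL4.integrable_norm_rpow (by norm_num) (by norm_num)
    refine h.congr ?_
    filter_upwards with a
    have h4 : ((4:ℝ≥0∞)).toReal = ((4:ℕ):ℝ) := by norm_num
    rw [h4, Real.rpow_natCast, Real.norm_eq_abs, pow_abs, abs_of_nonneg (by positivity)]
  have hint2 : Integrable (fun a => (η a)^2) ℙ :=
    (hL4.mono_exponent (by norm_num)).integrable_sq
  have hintcos : ∀ t : ℝ, Integrable (fun a => Real.cos (t * η a)) ℙ := fun t =>
    ⟨((hmeas.const_mul t).cos).aestronglyMeasurable,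
      HasFiniteIntegral.of_bounded (C := 1) (ae_of_all _ fun a => by
        rw [Real.norm_eq_abs]; exact Real.abs_cos_le_one _)⟩
  -- dominated convergence
  have key : Tendsto
      (fun t => ∫ a, (Real.cos (t * η a) - 1 + t^2*(η a)^2/2 - t^4*(η a)^4/24)/t^4 ∂ℙ)
      (𝓝[>] (0:ℝ)) (𝓝 (∫ _a : Ω, (0:ℝ) ∂ℙ)) := by
    apply tendsto_integral_filter_of_dominated_convergence (bound := fun a => (η a)^4/24)
    · filter_upwards with t
      exact ((((((hmeas.const_mul t).cos.sub measurable_const).add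
        (((hmeas.pow_const 2).const_mul (t^2)).div_const 2)).sub
        (((hmeas.pow_const 4).const_mul (t^4)).div_const 24)).div_const (t^4))).aestronglyMeasurable
    · filter_upwards [self_mem_nhdsWithin] with t ht
      filter_upwards with a
      have ht' : (0:ℝ) < t := ht
      have hx := asv_cos_taylor4_abs (t * η a)
      rw [mul_pow, mul_pow] at hx
      rw [Real.norm_eq_abs, abs_div, abs_of_pos (by positivity : (0:ℝ) < t^4),
        div_le_iff₀ (by positivity : (0:ℝ) < t^4)]
      rw [abs_le] at hx
      rw [abs_le]
      constructor <;> nlinarith [hx.1, hx.2]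
    · exact hint4.div_const 24
    · filter_upwards with a
      have hg : Tendsto (fun t : ℝ => t^2 * ((η a)^6/720)) (𝓝[>] (0:ℝ)) (𝓝 0) := by
        have : Tendsto (fun t : ℝ => t^2 * ((η a)^6/720)) (𝓝 0) (𝓝 (0^2 * ((η a)^6/720))) :=
          ((continuous_pow 2).tendsto 0).mul_const _
        simpa using this.mono_left nhdsWithin_le_nhds
      refine squeeze_zero_norm' ?_ hg
      filter_upwards [self_mem_nhdsWithin] with t ht
      have ht' : (0:ℝ) < t := ht
      have hx := asv_cos_taylor6_abs (t * η a)
      rw [mul_pow, mul_pow, mul_pow] at hx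
      rw [Real.norm_eq_abs, abs_div, abs_of_pos (by positivity : (0:ℝ) < t^4),
        div_le_iff₀ (by positivity : (0:ℝ) < t^4)]
      rw [abs_le] at hx
      rw [abs_le]
      constructor <;> nlinarith [hx.1, hx.2]
  rw [integral_zero] at key
  refine key.congr' ?_
  filter_upwards [self_mem_nhdsWithin] with t ht
  have ht' : (0:ℝ) < t := ht
  rw [integral_div]
  congr 1
  have heq : (fun a => Real.cos (t * η a) - 1 + t^2*(η a)^2/2 - t^4*(η a)^4/24)
      = fun a => ((Real.cos (t * η a) - 1) + (t^2/2)*(η a)^2) - (t^4/24)*(η a)^4 := by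
    funext a; ring
  have hI2 : Integrable (fun a => (t^2/2)*(η a)^2) ℙ := hint2.const_mul _
  have hI4 : Integrable (fun a => (t^4/24)*(η a)^4) ℙ := hint4.const_mul _
  have hIc : Integrable (fun a => Real.cos (t * η a) - 1) ℙ :=
    (hintcos t).sub (integrable_const 1)
  have hI1 : Integrable (fun a => (Real.cos (t * η a) - 1) + (t^2/2)*(η a)^2) ℙ := hIc.add hI2
  rw [heq, integral_sub hI1 hI4, integral_add hIc hI2,
    integral_sub (hintcos t) (integrable_const 1),
    integral_const_mul, integral_const_mul, integral_const,
    ← hφ, ← hs2, ← hμ4]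
  simp
  ring

theorem asv_expansion_near_zero
    {Ω : Type*} [MeasureSpace Ω] [IsProbabilityMeasure (ℙ : Measure Ω)]
    (η : Ω → ℝ) (hmeas : Measurable η) (hL4 : MemLp η 4 ℙ)
    (hsymm : IdentDistrib η (fun a => -η a) ℙ ℙ)
    (μ4 s2 : ℝ)
    (hμ4 : μ4 = ∫ a, (η a) ^ 4 ∂ℙ)
    (hs2 : s2 = ∫ a, (η a) ^ 2 ∂ℙ) (hs2pos : 0 < s2)
    (φ : ℝ → ℝ) (hφ : ∀ t, φ t = ∫ a, Real.cos (t * η a) ∂ℙ)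
    (f : ℝ → ℝ) (hf : ∀ ω, f ω = (1 - φ (2 * ω)) / (2 * ω ^ 2 * (φ ω) ^ 2)) :
    Tendsto f (𝓝[>] 0) (𝓝 s2) ∧
    Tendsto (fun ω => (f ω - s2) / ω ^ 2) (𝓝[>] 0)
      (𝓝 (-(1 / 3) * (μ4 - 3 * s2 ^ 2))) := by
  obtain ⟨E, hEdef⟩ : ∃ E : ℝ → ℝ, ∀ t, E t = (φ t - 1 + s2*t^2/2 - μ4*t^4/24)/t^4 :=
    ⟨_, fun t => rfl⟩
  have hE : Tendsto E (𝓝[>] (0:ℝ)) (𝓝 0) := by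
    have h := asv_char_expansion η hmeas hL4 μ4 s2 hμ4 hs2 φ hφ
    exact h.congr (fun t => (hEdef t).symm)
  have h2ω : Tendsto (fun ω : ℝ => 2*ω) (𝓝[>] (0:ℝ)) (𝓝[>] (0:ℝ)) := by
    apply tendsto_nhdsWithin_of_tendsto_nhds_of_eventually_within
    · have : Tendsto (fun ω : ℝ => 2*ω) (𝓝 0) (𝓝 (2*0)) :=
        (continuous_const.mul continuous_id).tendsto 0
      simpa using this.mono_left nhdsWithin_le_nhds
    · filter_upwards [self_mem_nhdsWithin] with ω hω
      exact mul_pos two_pos (show (0:ℝ) < ω from hω)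
  have hE2 : Tendsto (fun ω => E (2*ω)) (𝓝[>] (0:ℝ)) (𝓝 0) := hE.comp h2ω
  have hT2 : Tendsto (fun ω : ℝ => ω^2) (𝓝[>] (0:ℝ)) (𝓝 0) := by
    have : Tendsto (fun ω : ℝ => ω^2) (𝓝 0) (𝓝 (0^2)) := (continuous_pow 2).tendsto 0
    simpa using this.mono_left nhdsWithin_le_nhds
  have hT4 : Tendsto (fun ω : ℝ => ω^4) (𝓝[>] (0:ℝ)) (𝓝 0) := by
    have : Tendsto (fun ω : ℝ => ω^4) (𝓝 0) (𝓝 (0^4)) := (continuous_pow 4).tendsto 0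
    simpa using this.mono_left nhdsWithin_le_nhds
  have hφeq : ∀ t : ℝ, t ≠ 0 → φ t = 1 - s2*t^2/2 + μ4*t^4/24 + t^4 * E t := by
    intro t ht
    rw [hEdef]
    field_simp
    ring
  have hφlim : Tendsto φ (𝓝[>] (0:ℝ)) (𝓝 1) := by
    have h : Tendsto (fun ω : ℝ => 1 - s2*ω^2/2 + μ4*ω^4/24 + ω^4 * E ω) (𝓝[>] (0:ℝ))
        (𝓝 (1 - s2*0/2 + μ4*0/24 + 0*0)) :=
      ((tendsto_const_nhds.sub ((hT2.const_mul s2).div_const 2)).add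
        ((hT4.const_mul μ4).div_const 24)).add (hT4.mul hE)
    have h' : Tendsto (fun ω : ℝ => 1 - s2*ω^2/2 + μ4*ω^4/24 + ω^4 * E ω) (𝓝[>] (0:ℝ)) (𝓝 1) := by
      convert h using 2; ring
    refine h'.congr' ?_
    filter_upwards [self_mem_nhdsWithin] with ω hω
    exact (hφeq ω (ne_of_gt hω)).symm
  have hφne : ∀ᶠ ω in 𝓝[>] (0:ℝ), φ ω ≠ 0 := hφlim.eventually_ne one_ne_zero
  -- first eventual equality
  have hfeq : ∀ᶠ ω in 𝓝[>] (0:ℝ),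
      f ω = (2*s2 - (2/3)*μ4*ω^2 - 16*ω^2 * E (2*ω)) / (2 * (φ ω)^2) := by
    filter_upwards [self_mem_nhdsWithin] with ω hω
    have hω' : (0:ℝ) < ω := hω
    have hωne : ω ≠ 0 := ne_of_gt hω'
    rw [hf ω, hφeq (2*ω) (by positivity)]
    rcases eq_or_ne (φ ω) 0 with hp | hp
    · rw [hp]; norm_num
    · field_simp
      ring
  -- first limit
  have hnum1 : Tendsto (fun ω => 2*s2 - (2/3)*μ4*ω^2 - 16*ω^2 * E (2*ω)) (𝓝[>] (0:ℝ))
      (𝓝 (2*s2 - (2/3)*μ4*0 - 16*(0*0))) := by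
    refine (tendsto_const_nhds.sub ((hT2.const_mul ((2:ℝ)/3*μ4)).congr (fun ω => by ring))).sub ?_
    exact ((hT2.mul hE2).const_mul 16).congr (fun ω => by ring)
  have hden1 : Tendsto (fun ω => 2 * (φ ω)^2) (𝓝[>] (0:ℝ)) (𝓝 (2*1^2)) :=
    (hφlim.pow 2).const_mul 2
  have hlim1 : Tendsto f (𝓝[>] (0:ℝ)) (𝓝 s2) := by
    have h := hnum1.div hden1 (by norm_num)
    have h' : Tendsto (fun ω => (2*s2 - (2/3)*μ4*ω^2 - 16*ω^2 * E (2*ω)) / (2 * (φ ω)^2))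
        (𝓝[>] (0:ℝ)) (𝓝 s2) := by
      convert h using 2 <;> norm_num
    exact h'.congr' (hfeq.mono fun ω h => h.symm)
  refine ⟨hlim1, ?_⟩
  -- second eventual equality
  have hgeq : ∀ᶠ ω in 𝓝[>] (0:ℝ),
      (f ω - s2) / ω^2 =
        (-(2/3)*μ4 - 16 * E (2*ω)
          - 2*s2*(-(s2/2) + μ4*ω^2/24 + ω^2 * E ω)*(φ ω + 1)) / (2 * (φ ω)^2) := by
    filter_upwards [self_mem_nhdsWithin, hfeq, hφne] with ω hω hfω hp
    have hω' : (0:ℝ) < ω := hω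
    have hωne : ω ≠ 0 := ne_of_gt hω'
    rw [hfω]
    have hφω := hφeq ω hωne
    have h2p : (2 * (φ ω)^2) ≠ 0 := mul_ne_zero two_ne_zero (pow_ne_zero 2 hp)
    have step1 : (2*s2 - (2/3)*μ4*ω^2 - 16*ω^2 * E (2*ω)) / (2 * (φ ω)^2) - s2
        = (2*s2 - (2/3)*μ4*ω^2 - 16*ω^2 * E (2*ω) - s2*(2 * (φ ω)^2)) / (2 * (φ ω)^2) := by
      field_simp
    rw [step1, div_div,
      div_eq_div_iff (mul_ne_zero h2p (pow_ne_zero 2 hωne)) h2p]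
    linear_combination (-(4*s2*(φ ω + 1)*(φ ω)^2)) * hφω
  have hnum2 : Tendsto (fun ω => -(2/3)*μ4 - 16 * E (2*ω)
      - 2*s2*(-(s2/2) + μ4*ω^2/24 + ω^2 * E ω)*(φ ω + 1)) (𝓝[>] (0:ℝ))
      (𝓝 (-(2/3)*μ4 - 16*0 - 2*s2*(-(s2/2) + μ4*0/24 + 0*0)*(1+1))) := by
    refine (tendsto_const_nhds.sub (hE2.const_mul 16)).sub ?_
    exact (((tendsto_const_nhds.add ((hT2.const_mul μ4).div_const 24)).add
      (hT2.mul hE)).const_mul (2*s2)).mul (hφlim.add tendsto_const_nhds)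
  have h := hnum2.div hden1 (by norm_num)
  have h' : Tendsto (fun ω => (-(2/3)*μ4 - 16 * E (2*ω)
      - 2*s2*(-(s2/2) + μ4*ω^2/24 + ω^2 * E ω)*(φ ω + 1)) / (2 * (φ ω)^2))
      (𝓝[>] (0:ℝ)) (𝓝 (-(1/3) * (μ4 - 3*s2^2))) := by
    convert h using 2
    · rfl
    · ring
  exact h'.congr' (hgeq.mono fun ω hh => hh.symm)
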